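/- For every real number α > 0 there exists a constant C = C(α) > 0 such that for every integer n ≥ 2, one has ∫_{0}^{1} Q_{n,α}(x)^{1/α} dx ≥ C · log n. -/

import Mathlib

open Polynomial MeasureTheory

/-- `Q_{n,α}(x) = Σ_{j=0}^n ((α)_j / j!) x^j`, the `n`-th partial sum of the binomial
series of `(1-x)^(-α)`, where `(α)_j = α(α+1)⋯(α+j-1)` is the rising factorial. -/
noncomputable def Qpoly (α : ℝ) (n : ℕ) (x : ℝ) : ℝ :=
  ∑ j ∈ Finset.range (n + 1), (∏ i ∈ Finset.range j, (α + i)) / (j.factorial : ℝ) * x ^ j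


lemma sum_inv_sq_le (m : ℕ) : ∑ k ∈ Finset.range m, (1:ℝ)/((k:ℝ)+1)^2 ≤ 2 - 2/((m:ℝ)+1) := by
  induction m with
  | zero => norm_num
  | succ m ih =>
    rw [Finset.sum_range_succ]
    have h1 : (0:ℝ) < (m:ℝ) + 1 := by positivity
    have h2 : (0:ℝ) < (m:ℝ) + 2 := by positivity
    have key : (1:ℝ)/((m:ℝ)+1)^2 ≤ 2/((m:ℝ)+1) - 2/((m:ℝ)+1+1) := by
      rw [div_sub_div _ _ (ne_of_gt h1) (by positivity), div_le_div_iff₀ (by positivity) (by positivity)]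
      nlinarith
    push_cast
    linarith

lemma log_le_harmonic (m : ℕ) : Real.log ((m:ℝ)+1) ≤ ∑ k ∈ Finset.range m, (1:ℝ)/((k:ℝ)+1) := by
  induction m with
  | zero => simp
  | succ m ih =>
    rw [Finset.sum_range_succ]
    have h1 : (0:ℝ) < (m:ℝ) + 1 := by positivity
    have key : Real.log ((m:ℝ)+1+1) - Real.log ((m:ℝ)+1) ≤ 1/((m:ℝ)+1) := by
      rw [← Real.log_div (by positivity) (ne_of_gt h1)]
      have := Real.log_le_sub_one_of_pos (x := ((m:ℝ)+1+1)/((m:ℝ)+1)) (by positivity)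
      have heq : ((m:ℝ)+1+1)/((m:ℝ)+1) - 1 = 1/((m:ℝ)+1) := by field_simp; ring
      linarith
    push_cast
    linarith

lemma log_one_add_ge (t : ℝ) (ht : 0 ≤ t) : t - t^2 ≤ Real.log (1+t) := by
  have h1 : (0:ℝ) < 1 + t := by linarith
  have h0 := Real.log_le_sub_one_of_pos (x := 1/(1+t)) (by positivity)
  rw [Real.log_div one_ne_zero (ne_of_gt h1), Real.log_one] at h0
  -- h0 : 0 - log (1+t) ≤ 1/(1+t) - 1
  have h3 : Real.log (1+t) ≥ 1 - 1/(1+t) := by linarith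
  have h4 : 1 - 1/(1+t) = t/(1+t) := by field_simp; ring
  have h5 : t - t^2 ≤ t/(1+t) := by
    rw [le_div_iff₀ h1]
    nlinarith [sq_nonneg t]
  linarith [h4 ▸ h3]

lemma sum_asc (α : ℝ) (m : ℕ) :
    ∑ j ∈ Finset.range (m+1), (∏ i ∈ Finset.range j, (α + i)) / (j.factorial : ℝ)
      = (∏ i ∈ Finset.range m, (α + 1 + i)) / (m.factorial : ℝ) := by
  induction m with
  | zero => simp
  | succ m ih =>
    rw [Finset.sum_range_succ, ih]
    have hp : ∏ i ∈ Finset.range (m+1), (α + i)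
        = (∏ i ∈ Finset.range m, (α + 1 + i)) * α := by
      rw [Finset.prod_range_succ']
      congr 1
      · refine Finset.prod_congr rfl fun i _ => ?_
        push_cast; ring
      · norm_num
    rw [hp, Finset.prod_range_succ, Nat.factorial_succ]
    have hm : (0:ℝ) < m.factorial := by positivity
    field_simp
    push_cast
    ring

lemma fact_prod (m : ℕ) : (m.factorial : ℝ) = ∏ k ∈ Finset.range m, ((k:ℝ)+1) := by
  induction m with
  | zero => simp
  | succ m ih => rw [Finset.prod_range_succ, ← ih, Nat.factorial_succ]; push_cast; ring

lemma asc_eq_prod_ratio (α : ℝ) (m : ℕ) :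
    (∏ i ∈ Finset.range m, (α + 1 + i)) / (m.factorial : ℝ)
      = ∏ k ∈ Finset.range m, (1 + α/((k:ℝ)+1)) := by
  rw [fact_prod, ← Finset.prod_div_distrib]
  refine Finset.prod_congr rfl fun k _ => ?_
  have : ((k:ℝ)+1) ≠ 0 := by positivity
  field_simp
  ring

lemma prod_ratio_lb (α : ℝ) (hα : 0 < α) (m : ℕ) :
    Real.exp (-(2*α^2)) * ((m:ℝ)+1) ^ α ≤ ∏ k ∈ Finset.range m, (1 + α/((k:ℝ)+1)) := by
  have hpos : ∀ k ∈ Finset.range m, (0:ℝ) < 1 + α/((k:ℝ)+1) := by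
    intro k _; positivity
  have hprodpos : 0 < ∏ k ∈ Finset.range m, (1 + α/((k:ℝ)+1)) :=
    Finset.prod_pos hpos
  have hlog : Real.log (∏ k ∈ Finset.range m, (1 + α/((k:ℝ)+1)))
      = ∑ k ∈ Finset.range m, Real.log (1 + α/((k:ℝ)+1)) :=
    Real.log_prod (fun k hk => ne_of_gt (hpos k hk))
  have hterm : ∀ k ∈ Finset.range m,
      α/((k:ℝ)+1) - α^2 * (1/((k:ℝ)+1)^2) ≤ Real.log (1 + α/((k:ℝ)+1)) := by
    intro k _
    have h := log_one_add_ge (α/((k:ℝ)+1)) (by positivity)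
    have : (α/((k:ℝ)+1))^2 = α^2 * (1/((k:ℝ)+1)^2) := by
      rw [div_pow]; ring
    linarith [this ▸ h]
  have hsum : ∑ k ∈ Finset.range m, (α/((k:ℝ)+1) - α^2 * (1/((k:ℝ)+1)^2))
      ≤ Real.log (∏ k ∈ Finset.range m, (1 + α/((k:ℝ)+1))) := by
    rw [hlog]; exact Finset.sum_le_sum hterm
  have hsplit : ∑ k ∈ Finset.range m, (α/((k:ℝ)+1) - α^2 * (1/((k:ℝ)+1)^2))
      = α * (∑ k ∈ Finset.range m, 1/((k:ℝ)+1))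
        - α^2 * (∑ k ∈ Finset.range m, 1/((k:ℝ)+1)^2) := by
    rw [Finset.sum_sub_distrib, Finset.mul_sum, Finset.mul_sum]
    congr 1
    refine Finset.sum_congr rfl fun k _ => ?_
    ring
  have h1 := log_le_harmonic m
  have h2 := sum_inv_sq_le m
  have hge : α * Real.log ((m:ℝ)+1) - 2*α^2
      ≤ Real.log (∏ k ∈ Finset.range m, (1 + α/((k:ℝ)+1))) := by
    rw [hsplit] at hsum
    have hα2 : (0:ℝ) ≤ α^2 := sq_nonneg α
    have hs2 : α^2 * (∑ k ∈ Finset.range m, 1/((k:ℝ)+1)^2) ≤ α^2 * 2 := by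
      apply mul_le_mul_of_nonneg_left _ hα2
      have hp : (0:ℝ) < 2/((m:ℝ)+1) := by positivity
      linarith
    nlinarith [mul_le_mul_of_nonneg_left h1 (le_of_lt hα)]
  have hrpow : ((m:ℝ)+1) ^ α = Real.exp (α * Real.log ((m:ℝ)+1)) := by
    rw [Real.rpow_def_of_pos (by positivity), mul_comm]
  rw [hrpow, ← Real.exp_add]
  calc Real.exp (-(2*α^2) + α * Real.log ((m:ℝ)+1))
      ≤ Real.exp (Real.log (∏ k ∈ Finset.range m, (1 + α/((k:ℝ)+1)))) := by
        apply Real.exp_le_exp.mpr; linarith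
    _ = _ := Real.exp_log hprodpos

lemma coeff_nonneg (α : ℝ) (hα : 0 < α) (j : ℕ) :
    0 ≤ (∏ i ∈ Finset.range j, (α + i)) / (j.factorial : ℝ) := by
  apply div_nonneg _ (by positivity)
  exact Finset.prod_nonneg fun i _ => by positivity

lemma Qpoly_ge_one (α : ℝ) (hα : 0 < α) (n : ℕ) (x : ℝ) (hx : 0 ≤ x) :
    1 ≤ Qpoly α n x := by
  unfold Qpoly
  have h0 : (∏ i ∈ Finset.range 0, (α + i)) / ((0:ℕ).factorial : ℝ) * x ^ 0 = 1 := by simp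
  calc (1:ℝ) = (∏ i ∈ Finset.range 0, (α + i)) / ((0:ℕ).factorial : ℝ) * x ^ 0 := h0.symm
    _ ≤ _ := by
      apply Finset.single_le_sum (f := fun j => (∏ i ∈ Finset.range j, (α + i)) / (j.factorial : ℝ) * x ^ j)
        (fun j _ => mul_nonneg (coeff_nonneg α hα j) (pow_nonneg hx j))
      simp

lemma one_sub_ge_exp (y : ℝ) (hy0 : 0 ≤ y) (hy : y ≤ 1/2) : Real.exp (-(2*y)) ≤ 1 - y := by
  have h1 : 1 + 2*y ≤ Real.exp (2*y) := by
    have := Real.add_one_le_exp (2*y); linarith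
  have h2 : Real.exp (-(2*y)) = 1 / Real.exp (2*y) := by
    rw [Real.exp_neg]; ring
  rw [h2]
  have h3 : (0:ℝ) < 1 + 2*y := by linarith
  have h4 : (1:ℝ)/Real.exp (2*y) ≤ 1/(1+2*y) := by
    apply one_div_le_one_div_of_le h3 h1
  have h5 : (1:ℝ)/(1+2*y) ≤ 1 - y := by
    rw [div_le_iff₀ h3]; nlinarith
  linarith

lemma Qpoly_pointwise (α : ℝ) (hα : 0 < α) (n : ℕ) (hn : 2 ≤ n) (x : ℝ)
    (hx1 : 1/2 ≤ x) (hx2 : x ≤ 1 - 1/(n:ℝ)) :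
    Real.exp (-(2+2*α^2)) * (1/(2*(1-x))) ^ α ≤ Qpoly α n x := by
  set y := 1 - x with hy
  have hn0 : (0:ℝ) < n := by positivity
  have hy1 : 1/(n:ℝ) ≤ y := by simp only [hy]; linarith
  have hy2 : y ≤ 1/2 := by simp only [hy]; linarith
  have hy0 : 0 < y := lt_of_lt_of_le (by positivity) hy1
  have hinv2 : (2:ℝ) ≤ 1/y := by
    rw [le_div_iff₀ hy0]; linarith
  set M : ℕ := ⌊1/y⌋₊ with hM
  have hM1 : (M:ℝ) ≤ 1/y := Nat.floor_le (by positivity)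
  have hM2 : 1/y < (M:ℝ) + 1 := Nat.lt_floor_add_one _
  have hM2' : 2 ≤ M := Nat.le_floor hinv2
  have hMn : M ≤ n := by
    have : (M:ℝ) ≤ n := le_trans hM1 (by rw [div_le_iff₀ hy0]; calc (1:ℝ) = n * (1/n) := by field_simp
                                                                      _ ≤ n * y := by nlinarith)
    exact_mod_cast this
  obtain ⟨m, hm⟩ : ∃ m, M = m + 1 := ⟨M - 1, by omega⟩
  have hmM : ((m:ℝ)+1) = M := by rw [hm]; push_cast; ring
  have hMlb : 1/(2*y) ≤ (M:ℝ) := by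
    have : 1/(2*y) = (1/y)/2 := by field_simp
    rw [this]
    nlinarith
  have hx0 : (0 : ℝ) ≤ x := by linarith
  have hxle1 : x ≤ 1 := by linarith
  -- step 1: restrict sum
  have step1 : ∑ j ∈ Finset.range (m+1), (∏ i ∈ Finset.range j, (α + i)) / (j.factorial : ℝ) * x ^ j
      ≤ Qpoly α n x := by
    unfold Qpoly
    apply Finset.sum_le_sum_of_subset_of_nonneg
    · apply Finset.range_subset_range.mpr; omega
    · intro j _ _
      exact mul_nonneg (coeff_nonneg α hα j) (pow_nonneg hx0 j)
  -- step 2: x^j ≥ x^m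
  have step2 : (∑ j ∈ Finset.range (m+1), (∏ i ∈ Finset.range j, (α + i)) / (j.factorial : ℝ)) * x ^ m
      ≤ ∑ j ∈ Finset.range (m+1), (∏ i ∈ Finset.range j, (α + i)) / (j.factorial : ℝ) * x ^ j := by
    rw [Finset.sum_mul]
    apply Finset.sum_le_sum
    intro j hj
    apply mul_le_mul_of_nonneg_left _ (coeff_nonneg α hα j)
    exact pow_le_pow_of_le_one hx0 hxle1 (by have := Finset.mem_range.mp hj; omega)
  -- step 3: sum lower bound
  have step3 : Real.exp (-(2*α^2)) * (1/(2*y)) ^ α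
      ≤ ∑ j ∈ Finset.range (m+1), (∏ i ∈ Finset.range j, (α + i)) / (j.factorial : ℝ) := by
    rw [sum_asc, asc_eq_prod_ratio]
    refine le_trans ?_ (prod_ratio_lb α hα m)
    apply mul_le_mul_of_nonneg_left _ (Real.exp_nonneg _)
    apply Real.rpow_le_rpow (by positivity) _ (le_of_lt hα)
    rw [hmM]; exact hMlb
  -- step 4: x^m ≥ exp(-2)
  have step4 : Real.exp (-2) ≤ x ^ m := by
    have hxe : Real.exp (-(2*y)) ≤ x := by
      have := one_sub_ge_exp y (le_of_lt hy0) hy2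
      simpa [hy] using this
    calc Real.exp (-2) ≤ Real.exp (-(2*y)*m) := by
          apply Real.exp_le_exp.mpr
          have hym : y * m ≤ 1 := by
            have hm1 : (m:ℝ) ≤ 1/y := by
              have : (m:ℝ) ≤ (M:ℝ) := by rw [hm]; push_cast; linarith
              linarith
            calc y * m ≤ y * (1/y) := by nlinarith
              _ = 1 := by field_simp
          nlinarith
      _ = (Real.exp (-(2*y))) ^ m := by
          rw [← Real.exp_nat_mul]; ring_nf
      _ ≤ x ^ m := pow_le_pow_left₀ (Real.exp_nonneg _) hxe m
  -- combine
  have comb : Real.exp (-2) * (Real.exp (-(2*α^2)) * (1/(2*y)) ^ α)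
      ≤ Qpoly α n x := by
    calc Real.exp (-2) * (Real.exp (-(2*α^2)) * (1/(2*y)) ^ α)
        ≤ x ^ m * (∑ j ∈ Finset.range (m+1), (∏ i ∈ Finset.range j, (α + i)) / (j.factorial : ℝ)) := by
          apply mul_le_mul step4 step3 (by positivity) (by positivity)
      _ = (∑ j ∈ Finset.range (m+1), (∏ i ∈ Finset.range j, (α + i)) / (j.factorial : ℝ)) * x ^ m := by ring
      _ ≤ _ := le_trans step2 step1
  calc Real.exp (-(2+2*α^2)) * (1/(2*(1-x))) ^ α
      = Real.exp (-2) * (Real.exp (-(2*α^2)) * (1/(2*y)) ^ α) := by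
        have he : Real.exp (-(2+2*α^2)) = Real.exp (-2) * Real.exp (-(2*α^2)) := by
          rw [← Real.exp_add]; ring_nf
        rw [← hy, he]; ring
    _ ≤ Qpoly α n x := comb

lemma Qpoly_rpow_pointwise (α : ℝ) (hα : 0 < α) (n : ℕ) (hn : 2 ≤ n) (x : ℝ)
    (hx1 : 1/2 ≤ x) (hx2 : x ≤ 1 - 1/(n:ℝ)) :
    Real.exp (-(2+2*α^2)/α) * (1/2) * (1-x)⁻¹ ≤ (Qpoly α n x) ^ (1/α) := by
  have hn0 : (0:ℝ) < n := by positivity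
  have hy0 : 0 < 1 - x := by
    have : 1/(n:ℝ) > 0 := by positivity
    linarith
  have hbase : (0:ℝ) ≤ Real.exp (-(2+2*α^2)) * (1/(2*(1-x))) ^ α := by positivity
  have hmono : (Real.exp (-(2+2*α^2)) * (1/(2*(1-x))) ^ α) ^ (1/α) ≤ (Qpoly α n x) ^ (1/α) :=
    Real.rpow_le_rpow hbase (Qpoly_pointwise α hα n hn x hx1 hx2) (by positivity)
  refine le_trans (le_of_eq ?_) hmono
  rw [Real.mul_rpow (Real.exp_nonneg _) (by positivity), ← Real.exp_mul,
    ← Real.rpow_mul (by positivity : (0:ℝ) ≤ 1/(2*(1-x))),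
    mul_one_div_cancel (ne_of_gt hα), Real.rpow_one]
  rw [mul_comm (-(2+2*α^2)) (1/α)]
  have : 1/α * -(2+2*α^2) = -(2+2*α^2)/α := by ring
  rw [this]
  have h2 : (1:ℝ)/(2*(1-x)) = (1/2) * (1-x)⁻¹ := by
    field_simp
  rw [h2, mul_assoc]


lemma Qpoly_continuous (α : ℝ) (n : ℕ) : Continuous (fun x => Qpoly α n x) := by
  unfold Qpoly
  apply continuous_finset_sum
  intro j _
  exact (continuous_const.mul (continuous_pow j))

lemma f_continuous (α : ℝ) (hα : 0 < α) (n : ℕ) :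
    Continuous (fun x => (Qpoly α n x) ^ (1/α)) := by
  apply Continuous.rpow_const (Qpoly_continuous α n)
  intro x
  right
  positivity

lemma inv_integral (n : ℕ) (hn : 2 ≤ n) :
    ∫ x in (1/2 : ℝ)..(1 - 1/(n:ℝ)), (1-x)⁻¹ = Real.log n - Real.log 2 := by
  have hn0 : (0:ℝ) < n := by positivity
  have h1 : ∫ x in (1/2 : ℝ)..(1 - 1/(n:ℝ)), (1-x)⁻¹
      = ∫ x in (1 - (1 - 1/(n:ℝ)))..(1 - 1/2), x⁻¹ :=
    (intervalIntegral.integral_comp_sub_left (fun x => x⁻¹) 1).symm ▸ rfl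
  rw [intervalIntegral.integral_comp_sub_left (fun x => x⁻¹) 1]
  have e1 : 1 - (1 - 1/(n:ℝ)) = 1/(n:ℝ) := by ring
  have e2 : (1:ℝ) - 1/2 = 1/2 := by norm_num
  rw [e1, e2]
  rw [integral_inv]
  · have e3 : (1:ℝ)/2 / (1/(n:ℝ)) = (n:ℝ)/2 := by field_simp
    rw [e3, Real.log_div (by positivity) (by norm_num)]
  · intro h
    have h1n : (0:ℝ) < 1/(n:ℝ) := by positivity
    have : (0:ℝ) ∈ Set.uIcc (1/(n:ℝ)) (1/2) := h
    rw [Set.mem_uIcc] at this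
    rcases this with ⟨h2, _⟩ | ⟨h2, _⟩ <;> linarith

lemma integral_ge_one (α : ℝ) (hα : 0 < α) (n : ℕ) :
    1 ≤ ∫ x in (0:ℝ)..1, (Qpoly α n x) ^ (1/α) := by
  have h : ∫ x in (0:ℝ)..1, (1:ℝ) = 1 := by simp
  refine le_trans (le_of_eq h.symm) ?_
  apply intervalIntegral.integral_mono_on (by norm_num)
    intervalIntegrable_const ((f_continuous α hα n).intervalIntegrable _ _)
  intro x hx
  have h1 : 1 ≤ Qpoly α n x := Qpoly_ge_one α hα n x hx.1
  calc (1:ℝ) = 1 ^ (1/α) := (Real.one_rpow _).symm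
    _ ≤ (Qpoly α n x) ^ (1/α) := Real.rpow_le_rpow (by norm_num) h1 (by positivity)

lemma integral_main (α : ℝ) (hα : 0 < α) (n : ℕ) (hn : 2 ≤ n) :
    Real.exp (-(2+2*α^2)/α) * (1/2) * (Real.log n - Real.log 2)
      ≤ ∫ x in (0:ℝ)..1, (Qpoly α n x) ^ (1/α) := by
  set K := Real.exp (-(2+2*α^2)/α) * (1/2) with hK
  set f := fun x => (Qpoly α n x) ^ (1/α) with hf
  have hn0 : (0:ℝ) < n := by positivity
  have hn2 : (2:ℝ) ≤ n := by exact_mod_cast hn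
  have hinv : 1/(n:ℝ) ≤ 1/2 := by
    apply div_le_div_of_nonneg_left (by norm_num) (by norm_num) hn2
  have hhalf : (1/2:ℝ) ≤ 1 - 1/(n:ℝ) := by linarith
  have hlast : (1:ℝ) - 1/(n:ℝ) ≤ 1 := by
    have : (0:ℝ) < 1/(n:ℝ) := by positivity
    linarith
  have hfc : Continuous f := f_continuous α hα n
  have hmid : K * (Real.log n - Real.log 2) ≤ ∫ x in (1/2:ℝ)..(1 - 1/(n:ℝ)), f x := by
    have heq : ∫ x in (1/2:ℝ)..(1 - 1/(n:ℝ)), K * (1-x)⁻¹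
        = K * (Real.log n - Real.log 2) := by
      rw [intervalIntegral.integral_const_mul, inv_integral n hn]
    rw [← heq]
    apply intervalIntegral.integral_mono_on hhalf
    · apply ContinuousOn.intervalIntegrable
      apply ContinuousOn.mul continuousOn_const
      apply ContinuousOn.inv₀ ((continuous_const.sub continuous_id).continuousOn)
      intro x hx
      rw [Set.uIcc_of_le hhalf] at hx
      have : x ≤ 1 - 1/(n:ℝ) := hx.2
      have h1n : (0:ℝ) < 1/(n:ℝ) := by positivity
      intro h0
      simp only [Pi.sub_apply, id] at h0
      linarith
    · exact hfc.intervalIntegrable _ _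
    · intro x hx
      exact Qpoly_rpow_pointwise α hα n hn x hx.1 hx.2
  have i1 : IntervalIntegrable f MeasureTheory.volume 0 (1/2) := hfc.intervalIntegrable _ _
  have i2 : IntervalIntegrable f MeasureTheory.volume (1/2) (1 - 1/(n:ℝ)) := hfc.intervalIntegrable _ _
  have i3 : IntervalIntegrable f MeasureTheory.volume (1 - 1/(n:ℝ)) 1 := hfc.intervalIntegrable _ _
  have fnonneg : ∀ u : ℝ, 0 ≤ u → u ≤ 1 → 0 ≤ f u := by
    intro u hu _
    apply Real.rpow_nonneg
    linarith [Qpoly_ge_one α hα n u hu]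
  have h1 : 0 ≤ ∫ x in (0:ℝ)..(1/2), f x := by
    apply intervalIntegral.integral_nonneg (by norm_num)
    intro u hu
    exact fnonneg u hu.1 (by linarith [hu.2])
  have h3 : 0 ≤ ∫ x in (1 - 1/(n:ℝ))..1, f x := by
    apply intervalIntegral.integral_nonneg hlast
    intro u hu
    exact fnonneg u (by linarith [hu.1]) hu.2
  have split1 : (∫ x in (0:ℝ)..(1/2), f x) + (∫ x in (1/2:ℝ)..(1 - 1/(n:ℝ)), f x)
      = ∫ x in (0:ℝ)..(1 - 1/(n:ℝ)), f x :=
    intervalIntegral.integral_add_adjacent_intervals i1 i2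
  have split2 : (∫ x in (0:ℝ)..(1 - 1/(n:ℝ)), f x) + (∫ x in (1 - 1/(n:ℝ))..1, f x)
      = ∫ x in (0:ℝ)..1, f x :=
    intervalIntegral.integral_add_adjacent_intervals (i1.trans i2) i3
  linarith


/-- For every `α > 0`, `∫_0^1 Q_{n,α}(x)^(1/α) dx ≥ C(α) log n`. -/
theorem stmt13 (α : ℝ) (hα : 0 < α) :
    ∃ C : ℝ, 0 < C ∧ ∀ n : ℕ, 2 ≤ n →
      C * Real.log n ≤ ∫ x in (0 : ℝ)..1, (Qpoly α n x) ^ (1 / α) := by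
  set K := Real.exp (-(2+2*α^2)/α) * (1/2) with hK
  have hKpos : 0 < K := by positivity
  set K' := min K 1 with hK'
  have hK'pos : 0 < K' := lt_min hKpos one_pos
  refine ⟨K'/2, by positivity, ?_⟩
  intro n hn
  have hn2 : (2:ℝ) ≤ n := by exact_mod_cast hn
  have hlog2 : Real.log 2 ≤ Real.log n := Real.log_le_log (by norm_num) hn2
  have hlogn0 : 0 ≤ Real.log n := Real.log_nonneg (by linarith)
  have hlog2' : Real.log 2 ≤ 1 := by
    have := Real.log_le_sub_one_of_pos (by norm_num : (0:ℝ) < 2)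
    linarith
  have hlog20 : 0 ≤ Real.log 2 := Real.log_nonneg (by norm_num)
  have hI1 : 1 ≤ ∫ x in (0:ℝ)..1, (Qpoly α n x) ^ (1/α) := integral_ge_one α hα n
  have hI2 : K * (Real.log n - Real.log 2) ≤ ∫ x in (0:ℝ)..1, (Qpoly α n x) ^ (1/α) :=
    integral_main α hα n hn
  have hK'K : K' ≤ K := min_le_left _ _
  have hK'1 : K' ≤ 1 := min_le_right _ _
  have h1 : K' * (Real.log n - Real.log 2) ≤ K * (Real.log n - Real.log 2) := by
    apply mul_le_mul_of_nonneg_right hK'K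
    linarith
  have h2 : K' * Real.log 2 ≤ 1 := by
    calc K' * Real.log 2 ≤ 1 * Real.log 2 := by
          apply mul_le_mul_of_nonneg_right hK'1 hlog20
      _ ≤ 1 := by linarith
  nlinarith
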